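/- Let σ be a permutation of {1,…,r} and let s = #{i : σ(i) < i}. Then Σ_{i : σ(i) < i} (i − σ(i)) ≤ s(r − s). -/

import Mathlib

open scoped BigOperators

namespace PermStats

/-- The number of drops `c_<(σ) = #{i : σ(i) < i}` of a permutation of `Fin r`. -/
def drops {r : ℕ} (σ : Equiv.Perm (Fin r)) : ℕ :=
  (Finset.univ.filter fun i => σ i < i).card

/-- The number of jumps `c_>(σ) = #{i : σ(i) > i}` of a permutation of `Fin r`. -/
def jumps {r : ℕ} (σ : Equiv.Perm (Fin r)) : ℕ :=
  (Finset.univ.filter fun i => i < σ i).card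

/-- The height `ht(σ) = ∑_i |σ(i) - i|` of a permutation of `Fin r`. -/
def ht {r : ℕ} (σ : Equiv.Perm (Fin r)) : ℕ :=
  ∑ i : Fin r, Nat.dist ((σ i : ℕ)) (i : ℕ)

private lemma sum_range_aux (r m : ℕ) (h : 2*m ≤ r) :
    ∑ j ∈ Finset.range m, (r - (2*j+1)) = m * (r - m) := by
  induction m with
  | zero => simp
  | succ n ih =>
    rw [Finset.sum_range_succ, ih (by omega)]
    have h1 : n ≤ r := by omega
    have h2 : 2*n+1 ≤ r := by omega
    have h3 : n+1 ≤ r := by omega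
    zify [h1, h2, h3]
    ring

private lemma min3_card (r m k : ℕ) :
    min (min (k+1) (r - (k+1))) m
      = ((Finset.range m).filter (fun j => j ≤ k ∧ k + j + 1 < r)).card := by
  rw [show (Finset.range m).filter (fun j => j ≤ k ∧ k + j + 1 < r)
      = Finset.range (min (min (k+1) (r-(k+1))) m) from ?_]
  · exact (Finset.card_range _).symm
  · ext j
    simp only [Finset.mem_filter, Finset.mem_range]
    omega

private lemma sum_min3 (r m : ℕ) (h : 2*m ≤ r) :
    ∑ k ∈ Finset.range r, min (min (k+1) (r-(k+1))) m ≤ m * (r - m) := by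
  have : ∑ k ∈ Finset.range r, min (min (k+1) (r-(k+1))) m = m * (r - m) := by
    calc ∑ k ∈ Finset.range r, min (min (k+1) (r-(k+1))) m
        = ∑ k ∈ Finset.range r,
            ((Finset.range m).filter (fun j => j ≤ k ∧ k + j + 1 < r)).card :=
          Finset.sum_congr rfl (fun k _ => min3_card r m k)
      _ = ∑ k ∈ Finset.range r, ∑ j ∈ Finset.range m,
            (if j ≤ k ∧ k + j + 1 < r then 1 else 0) := by
          simp only [Finset.card_filter]
      _ = ∑ j ∈ Finset.range m, ∑ k ∈ Finset.range r,
            (if j ≤ k ∧ k + j + 1 < r then 1 else 0) := Finset.sum_comm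
      _ = ∑ j ∈ Finset.range m,
            ((Finset.range r).filter (fun k => j ≤ k ∧ k + j + 1 < r)).card := by
          simp only [Finset.card_filter]
      _ = ∑ j ∈ Finset.range m, (r - (2*j+1)) := by
          refine Finset.sum_congr rfl fun j _ => ?_
          rw [show (Finset.range r).filter (fun k => j ≤ k ∧ k + j + 1 < r)
              = Finset.Ico j (r - (j+1)) from ?_]
          · rw [Nat.card_Ico]; omega
          · ext k
            simp only [Finset.mem_filter, Finset.mem_range, Finset.mem_Ico]
            omega
      _ = m * (r - m) := sum_range_aux r m h
  exact le_of_eq this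

/-- Fiber bound: the number of indices with `σ i ≤ k < i` is at most each of
`k+1`, `r-(k+1)`, `drops σ`, `jumps σ`. -/
private lemma fiber_le (r : ℕ) (σ : Equiv.Perm (Fin r)) (k : ℕ) :
    (Finset.univ.filter (fun i : Fin r => (σ i : ℕ) ≤ k ∧ k < (i : ℕ))).card ≤
      min (min (k+1) (r-(k+1))) (min (drops σ) (jumps σ)) := by
  classical
  set A := Finset.univ.filter (fun i : Fin r => (σ i : ℕ) ≤ k) with hA
  set B := Finset.univ.filter (fun i : Fin r => (i : ℕ) ≤ k) with hB
  set F := Finset.univ.filter (fun i : Fin r => (σ i : ℕ) ≤ k ∧ k < (i : ℕ)) with hF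
  have hFsub : F = A \ B := by
    ext i
    simp only [hF, hA, hB, Finset.mem_filter, Finset.mem_sdiff, Finset.mem_univ, true_and]
    omega
  have hcardAB : A.card = B.card := by
    apply Finset.card_bij' (fun i _ => σ i) (fun i _ => σ.symm i)
    · intro a ha
      simp only [hA, hB, Finset.mem_filter, Finset.mem_univ, true_and] at ha ⊢
      exact ha
    · intro a ha
      simp only [hA, hB, Finset.mem_filter, Finset.mem_univ, true_and,
        Equiv.apply_symm_apply] at ha ⊢
      exact ha
    · intro a _; exact σ.symm_apply_apply a
    · intro a _; exact σ.apply_symm_apply a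
  have hFG : F.card = (B \ A).card := by
    rw [hFsub]; exact Finset.card_sdiff_comm hcardAB
  have h4 : F.card ≤ jumps σ := by
    rw [hFG]
    apply Finset.card_le_card
    intro i hi
    simp only [hA, hB, Finset.mem_sdiff, Finset.mem_filter, Finset.mem_univ, true_and] at hi
    simp only [jumps, Finset.mem_filter, Finset.mem_univ, true_and, Fin.lt_def]
    omega
  have h3 : F.card ≤ drops σ := by
    apply Finset.card_le_card
    intro i hi
    simp only [hF, Finset.mem_filter, Finset.mem_univ, true_and] at hi
    simp only [drops, Finset.mem_filter, Finset.mem_univ, true_and, Fin.lt_def]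
    omega
  have h1 : F.card ≤ k + 1 := by
    rw [hFG]
    calc (B \ A).card ≤ B.card := Finset.card_le_card (Finset.sdiff_subset)
      _ ≤ (Finset.range (k+1)).card := by
          refine Finset.card_le_card_of_injOn (fun i : Fin r => (i : ℕ)) ?_ ?_
          · intro i hi
            simp only [hB, Finset.mem_coe, Finset.mem_filter, Finset.mem_univ, true_and] at hi
            simp only [Finset.mem_coe, Finset.mem_range]; omega
          · exact Fin.val_injective.injOn
      _ = k + 1 := Finset.card_range _
  have h2 : F.card ≤ r - (k+1) := by
    calc F.card ≤ (Finset.Ico (k+1) r).card := by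
          refine Finset.card_le_card_of_injOn (fun i : Fin r => (i : ℕ)) ?_ ?_
          · intro i hi
            simp only [hF, Finset.mem_coe, Finset.mem_filter, Finset.mem_univ, true_and] at hi
            simp only [Finset.mem_coe, Finset.mem_Ico]
            exact ⟨by omega, i.isLt⟩
          · exact Fin.val_injective.injOn
      _ = r - (k+1) := Nat.card_Ico _ _
  exact le_min (le_min h1 h2) (le_min h3 h4)

/-- For any permutation `σ` of `{1,…,r}` with `s = c_<(σ)` drops, the sum
of `i - σ(i)` over the drop positions is at most `s(r - s)`. -/
theorem sum_drops_le (r : ℕ) (σ : Equiv.Perm (Fin r)) :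
    ∑ i ∈ Finset.univ.filter (fun i => σ i < i), ((i : ℕ) - (σ i : ℕ)) ≤
      drops σ * (r - drops σ) := by
  classical
  set s := drops σ with hs
  set t := jumps σ with htj
  -- s + t ≤ r
  have hst : s + t ≤ r := by
    have hdisj : Disjoint (Finset.univ.filter (fun i : Fin r => σ i < i))
        (Finset.univ.filter (fun i : Fin r => i < σ i)) := by
      rw [Finset.disjoint_left]
      intro a haD haJ
      simp only [Finset.mem_filter, Finset.mem_univ, true_and] at haD haJ
      exact absurd (haD.trans haJ) (lt_irrefl _)
    calc s + t = ((Finset.univ.filter (fun i : Fin r => σ i < i)) ∪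
          (Finset.univ.filter (fun i : Fin r => i < σ i))).card :=
          (Finset.card_union_of_disjoint hdisj).symm
      _ ≤ (Finset.univ : Finset (Fin r)).card :=
          Finset.card_le_card (Finset.subset_univ _)
      _ = r := by simp
  have hsr : s ≤ r := by omega
  set m := min s t with hm
  have h2m : 2 * m ≤ r := by
    rcases le_total s t with h | h
    · simp only [hm, min_eq_left h]; omega
    · simp only [hm, min_eq_right h]; omega
  -- the sum as a double count
  have key : ∑ i ∈ Finset.univ.filter (fun i : Fin r => σ i < i), ((i : ℕ) - (σ i : ℕ))
      = ∑ k ∈ Finset.range r,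
          (Finset.univ.filter (fun i : Fin r => (σ i : ℕ) ≤ k ∧ k < (i : ℕ))).card := by
    calc ∑ i ∈ Finset.univ.filter (fun i : Fin r => σ i < i), ((i : ℕ) - (σ i : ℕ))
        = ∑ i ∈ Finset.univ.filter (fun i : Fin r => σ i < i),
            ∑ k ∈ Finset.range r, (if (σ i : ℕ) ≤ k ∧ k < (i : ℕ) then 1 else 0) := by
          refine Finset.sum_congr rfl fun i _ => ?_
          rw [← Finset.card_filter]
          rw [show (Finset.range r).filter (fun k => (σ i : ℕ) ≤ k ∧ k < (i : ℕ))
              = Finset.Ico ((σ i : ℕ)) ((i : ℕ)) from ?_]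
          · rw [Nat.card_Ico]
          · ext k
            simp only [Finset.mem_filter, Finset.mem_range, Finset.mem_Ico]
            have := i.isLt
            omega
      _ = ∑ k ∈ Finset.range r,
            ∑ i ∈ Finset.univ.filter (fun i : Fin r => σ i < i),
              (if (σ i : ℕ) ≤ k ∧ k < (i : ℕ) then 1 else 0) := Finset.sum_comm
      _ = ∑ k ∈ Finset.range r,
            (Finset.univ.filter (fun i : Fin r => (σ i : ℕ) ≤ k ∧ k < (i : ℕ))).card := by
          refine Finset.sum_congr rfl fun k _ => ?_
          rw [← Finset.card_filter, Finset.filter_filter]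
          congr 1
          apply Finset.filter_congr
          intro i _
          simp only [Fin.lt_def]
          constructor
          · rintro ⟨_, h⟩; exact h
          · intro h; exact ⟨by omega, h⟩
  rw [key]
  calc ∑ k ∈ Finset.range r,
        (Finset.univ.filter (fun i : Fin r => (σ i : ℕ) ≤ k ∧ k < (i : ℕ))).card
      ≤ ∑ k ∈ Finset.range r, min (min (k+1) (r-(k+1))) m :=
        Finset.sum_le_sum fun k _ => fiber_le r σ k
    _ ≤ m * (r - m) := sum_min3 r m h2m
    _ ≤ s * (r - s) := by
        rcases le_total s t with h | h
        · simp only [hm, min_eq_left h]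
          exact le_rfl
        · simp only [hm, min_eq_right h]
          have h1 : t ≤ r := by omega
          zify [h1, hsr]
          nlinarith [Int.ofNat_le.mpr h, Int.ofNat_le.mpr hst]

end PermStats
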